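/- For 1 ≤ k ≤ n, every intersecting family of subsets of [n], each of size at most k, has size at most C(n-1,k-1) + C(n-1,k-2) + ... + C(n-1,0). -/

import Mathlib

open Finset

theorem stmt_13 (n k : ℕ) (hk1 : 1 ≤ k) (hk2 : k ≤ n)
    (F : Finset (Finset (Fin n)))
    (hcard : ∀ A ∈ F, A.card ≤ k)
    (hint : ∀ A ∈ F, ∀ B ∈ F, (A ∩ B).Nonempty) :
    F.card ≤ ∑ i ∈ Finset.range k, (n - 1).choose i := by
  classical
  have hFint : (F : Set (Finset (Fin n))).Intersecting := by
    intro A hA B hB hd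
    exact (hint A hA B hB).ne_empty (Finset.disjoint_iff_inter_eq_empty.mp hd)
  by_cases hkn : k = n
  · -- easy case k = n : use the 2^(n-1) bound
    subst hkn
    obtain ⟨k', rfl⟩ : ∃ k', k = k' + 1 := ⟨k - 1, by omega⟩
    have h2 := hFint.card_le
    rw [Fintype.card_finset, Fintype.card_fin] at h2
    have hsum : ∑ i ∈ Finset.range (k' + 1), (k' + 1 - 1).choose i = 2 ^ k' := by
      simpa using Nat.sum_range_choose k'
    rw [hsum]
    have : 2 ^ (k' + 1) = 2 * 2 ^ k' := by ring
    omega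
  have hklt : k < n := lt_of_le_of_ne hk2 hkn
  set f : ℕ → ℕ := fun i => #(F.filter fun A => A.card = i) with hf
  set g : ℕ → ℕ := fun i => (n - 1).choose (i - 1) with hg
  have hfib : F.card = ∑ i ∈ Icc 1 k, f i := by
    apply card_eq_sum_card_fiberwise (f := Finset.card)
    intro A hA
    rw [mem_coe, mem_Icc]
    refine ⟨?_, hcard A hA⟩
    have h := hint A hA A hA
    rw [inter_self] at h
    exact card_pos.mpr h
  have hrhs : ∑ i ∈ Finset.range k, (n - 1).choose i = ∑ i ∈ Icc 1 k, g i := by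
    refine Finset.sum_nbij' (fun i => i + 1) (fun i => i - 1) ?_ ?_ ?_ ?_ ?_
    · intro a ha; rw [mem_range] at ha; rw [mem_Icc]; omega
    · intro a ha; rw [mem_Icc] at ha; rw [mem_range]; omega
    · intro a _; omega
    · intro a ha; rw [mem_Icc] at ha; omega
    · intro a _; simp [hg]
  have ekr : ∀ r, 1 ≤ r → 2 * r ≤ n → f r ≤ g r := by
    intro r h1 h2
    have hI : ((F.filter fun A => A.card = r : Finset _) :
        Set (Finset (Fin n))).Intersecting := by
      apply hFint.mono
      exact_mod_cast Finset.filter_subset _ _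
    have hS : ((F.filter fun A => A.card = r : Finset _) :
        Set (Finset (Fin n))).Sized r := by
      intro A hA
      simp only [Finset.coe_filter, Set.mem_setOf_eq] at hA
      exact hA.2
    exact Finset.erdos_ko_rado hI hS (by omega)
  have pair : ∀ r, 1 ≤ r → 2 * r < n → f r + f (n - r) ≤ n.choose r := by
    intro r h1 h2
    set 𝒜 := F.filter fun A => A.card = r with h𝒜
    set ℬ := (F.filter fun A => A.card = n - r).image fun A => Aᶜ with hℬ
    have hdisj : Disjoint 𝒜 ℬ := by
      rw [Finset.disjoint_left]
      intro X hX hX2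
      rw [h𝒜, mem_filter] at hX
      rw [hℬ, mem_image] at hX2
      obtain ⟨A, hA, hAX⟩ := hX2
      rw [mem_filter] at hA
      have h3 := hint A hA.1 X hX.1
      rw [← hAX] at h3
      simp at h3
    have hcard2 : ℬ.card = f (n - r) := by
      rw [hℬ]
      exact card_image_of_injective _ compl_injective
    have hsub : 𝒜 ∪ ℬ ⊆ Finset.univ.powersetCard r := by
      intro X hX
      rw [mem_union] at hX
      rw [Finset.mem_powersetCard_univ]
      rcases hX with h | h
      · exact (mem_filter.1 h).2
      · rw [hℬ, mem_image] at h
        obtain ⟨A, hA, hAX⟩ := h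
        have hAc := (mem_filter.1 hA).2
        rw [← hAX, Finset.card_compl, hAc, Fintype.card_fin]
        omega
    calc f r + f (n - r) = (𝒜 ∪ ℬ).card := by
          rw [card_union_of_disjoint hdisj, hcard2]
      _ ≤ (Finset.univ.powersetCard r).card := card_le_card hsub
      _ = n.choose r := by rw [card_powersetCard, card_univ, Fintype.card_fin]
  by_cases h2k : 2 * k ≤ n
  · -- all levels handled by EKR
    rw [hfib, hrhs]
    refine Finset.sum_le_sum fun i hi => ?_
    rw [mem_Icc] at hi
    exact ekr i hi.1 (by omega)
  · -- split levels at m = n / 2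
    set m := n / 2 with hm
    have split : ∀ φ : ℕ → ℕ, ∑ i ∈ Icc 1 k, φ i
        = ∑ i ∈ Icc 1 m, φ i + ∑ j ∈ Icc (n - k) (n - m - 1), φ (n - j) := by
      intro φ
      have h1 : Icc 1 k = Icc 1 m ∪ Icc (m + 1) k := by
        ext x; rw [mem_union, mem_Icc, mem_Icc, mem_Icc]; omega
      have hd : Disjoint (Icc 1 m) (Icc (m + 1) k) := by
        rw [Finset.disjoint_left]
        intro x hx hx2
        rw [mem_Icc] at hx hx2
        omega
      rw [h1, Finset.sum_union hd]
      congr 1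
      refine Finset.sum_nbij' (fun i => n - i) (fun j => n - j) ?_ ?_ ?_ ?_ ?_
      · intro a ha; rw [mem_Icc] at ha ⊢; omega
      · intro a ha; rw [mem_Icc] at ha ⊢; omega
      · intro a ha; rw [mem_Icc] at ha; omega
      · intro a ha; rw [mem_Icc] at ha; omega
      · intro a ha; rw [mem_Icc] at ha; congr 1; omega
    have hI2 : Icc (n - k) (n - m - 1) ⊆ Icc 1 m := by
      intro j hj
      rw [mem_Icc] at hj ⊢
      omega
    rw [hfib, hrhs, split f, split g]
    have key : ∀ φ : ℕ → ℕ, ∑ i ∈ Icc 1 m, φ i + ∑ j ∈ Icc (n - k) (n - m - 1), φ (n - j)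
        = ∑ i ∈ Icc 1 m, (φ i + if i ∈ Icc (n - k) (n - m - 1) then φ (n - i) else 0) := by
      intro φ
      rw [Finset.sum_add_distrib, Finset.sum_ite_mem,
        Finset.inter_eq_right.2 hI2]
    rw [key f, key g]
    refine Finset.sum_le_sum fun i hi => ?_
    rw [mem_Icc] at hi
    by_cases hin : i ∈ Icc (n - k) (n - m - 1)
    · rw [if_pos hin, if_pos hin]
      rw [mem_Icc] at hin
      have h2i : 2 * i < n := by omega
      have hp := pair i hi.1 h2i
      have hchoose : n.choose i = g i + g (n - i) := by
        obtain ⟨i', rfl⟩ : ∃ i', i = i' + 1 := ⟨i - 1, by omega⟩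
        obtain ⟨n', rfl⟩ : ∃ n', n = n' + 1 := ⟨n - 1, by omega⟩
        simp only [hg, Nat.add_sub_cancel]
        rw [Nat.choose_succ_succ]
        congr 1
        rw [show n' + 1 - (i' + 1) - 1 = n' - (i' + 1) by omega,
          Nat.choose_symm (by omega)]
      omega
    · rw [if_neg hin, if_neg hin]
      exact ekr i hi.1 (by omega)
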